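/- For every integer q≥2 and every odd integer D≥5, the integer (q−1)²(q+1) does not divide the integer q²(q^D−1)(q^{D+1}+1)(q^{2D−2}−q^{D−2}+q^{D−3}−1). -/

import Mathlib

private lemma pow_reduce (M a : ℤ) (h4 : a ^ 4 ≡ 1 [ZMOD M]) (k r n : ℕ)
    (h : n = 4 * k + r) : a ^ n ≡ a ^ r [ZMOD M] := by
  subst h
  rw [pow_add, pow_mul]
  simpa using (h4.pow k).mul_right (a ^ r)

private lemma Nred (M q c0 c1 c2 c3 c4 c5 : ℤ) (m : ℕ)
    (h0 : q ^ 2 ≡ c0 [ZMOD M])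
    (h1 : q ^ (2 * m + 5) ≡ c1 [ZMOD M])
    (h2 : q ^ (2 * m + 6) ≡ c2 [ZMOD M])
    (h3 : q ^ (4 * m + 8) ≡ c3 [ZMOD M])
    (h4 : q ^ (2 * m + 3) ≡ c4 [ZMOD M])
    (h5 : q ^ (2 * m + 2) ≡ c5 [ZMOD M]) :
    q ^ 2 * (q ^ (2 * m + 5) - 1) * (q ^ (2 * m + 6) + 1) *
      (q ^ (4 * m + 8) - q ^ (2 * m + 3) + q ^ (2 * m + 2) - 1)
    ≡ c0 * (c1 - 1) * (c2 + 1) * (c3 - c4 + c5 - 1) [ZMOD M] :=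
  ((h0.mul (h1.sub_right 1)).mul (h2.add_right 1)).mul
    (((h3.sub h4).add h5).sub_right 1)

theorem stmt13 (q : ℤ) (hq : 2 ≤ q) (D : ℕ) (hD : 5 ≤ D) (hodd : Odd D) :
    ¬ ((q - 1) ^ 2 * (q + 1) ∣
      q ^ 2 * (q ^ D - 1) * (q ^ (D + 1) + 1) *
        (q ^ (2 * D - 2) - q ^ (D - 2) + q ^ (D - 3) - 1)) := by
  intro h
  obtain ⟨n, hn⟩ := hodd
  set m := n - 2 with hmdef
  rw [show 2 * D - 2 = 4 * m + 8 by omega, show D - 2 = 2 * m + 3 by omega,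
      show D - 3 = 2 * m + 2 by omega, show D + 1 = 2 * m + 6 by omega,
      show D = 2 * m + 5 by omega] at h
  -- step 1: mod (q+1), N ≡ -8, hence (q+1) ∣ 8
  have hq1 : q ≡ -1 [ZMOD q + 1] := Int.ModEq.symm (Int.modEq_iff_dvd.mpr ⟨1, by ring⟩)
  have hp : ∀ e : ℕ, ∀ c : ℤ, ((-1 : ℤ)) ^ e = c → q ^ e ≡ c [ZMOD q + 1] := by
    intro e c hc
    have := hq1.pow e
    rwa [hc] at this
  have hNC := Nred (q + 1) q 1 (-1) 1 1 (-1) 1 m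
    (hp 2 1 (by norm_num))
    (hp (2 * m + 5) (-1) (Odd.neg_one_pow ⟨m + 2, by ring⟩))
    (hp (2 * m + 6) 1 (Even.neg_one_pow ⟨m + 3, by ring⟩))
    (hp (4 * m + 8) 1 (Even.neg_one_pow ⟨2 * m + 4, by ring⟩))
    (hp (2 * m + 3) (-1) (Odd.neg_one_pow ⟨m + 1, by ring⟩))
    (hp (2 * m + 2) 1 (Even.neg_one_pow ⟨m + 1, by ring⟩))
  have hdvd1 : (q + 1) ∣ q ^ 2 * (q ^ (2 * m + 5) - 1) * (q ^ (2 * m + 6) + 1) *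
      (q ^ (4 * m + 8) - q ^ (2 * m + 3) + q ^ (2 * m + 2) - 1) :=
    dvd_trans (dvd_mul_left _ _) h
  have h8 : (q + 1) ∣ (8 : ℤ) := by
    have h2 := hNC.dvd
    norm_num at h2
    have h3 := dvd_add h2 hdvd1
    have h4 : (q + 1) ∣ (-8 : ℤ) := by
      rw [sub_add_cancel] at h3; exact h3
    exact (dvd_neg).mp h4
  have hle : q + 1 ≤ 8 := Int.le_of_dvd (by norm_num) h8
  have hq7 : q ≤ 7 := by omega
  interval_cases q
  · omega
  · -- q = 3 : show 16 ∤ N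
    rw [show ((3 : ℤ) - 1) ^ 2 * (3 + 1) = 16 by norm_num] at h
    have h4 : (3 : ℤ) ^ 4 ≡ 1 [ZMOD 16] := by decide
    rcases Nat.even_or_odd m with ⟨j, hj⟩ | ⟨j, hj⟩
    · have hC := Nred 16 3 (3 ^ 2) (3 ^ 5) (3 ^ 6) (3 ^ 0) (3 ^ 3) (3 ^ 2) m
        (Int.ModEq.refl _)
        (pow_reduce _ _ h4 j 5 _ (by omega)) (pow_reduce _ _ h4 j 6 _ (by omega))
        (pow_reduce _ _ h4 (2 * j + 2) 0 _ (by omega))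
        (pow_reduce _ _ h4 j 3 _ (by omega)) (pow_reduce _ _ h4 j 2 _ (by omega))
      have h0 := Int.emod_eq_zero_of_dvd h
      rw [Int.ModEq, h0] at hC
      norm_num at hC
    · have hC := Nred 16 3 (3 ^ 2) (3 ^ 7) (3 ^ 0) (3 ^ 0) (3 ^ 5) (3 ^ 0) m
        (Int.ModEq.refl _)
        (pow_reduce _ _ h4 (j + 1) 3 _ (by omega)) (pow_reduce _ _ h4 (j + 2) 0 _ (by omega))
        (pow_reduce _ _ h4 (2 * j + 3) 0 _ (by omega))
        (pow_reduce _ _ h4 (j + 1) 1 _ (by omega)) (pow_reduce _ _ h4 (j + 1) 0 _ (by omega))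
      have h0 := Int.emod_eq_zero_of_dvd h
      rw [Int.ModEq, h0] at hC
      norm_num at hC
  · omega
  · omega
  · omega
  · -- q = 7
    have h32 : (32 : ℤ) ∣ 7 ^ 2 * (7 ^ (2 * m + 5) - 1) * (7 ^ (2 * m + 6) + 1) *
        (7 ^ (4 * m + 8) - 7 ^ (2 * m + 3) + 7 ^ (2 * m + 2) - 1) := by
      refine dvd_trans ?_ h
      norm_num
    have h4 : (7 : ℤ) ^ 4 ≡ 1 [ZMOD 32] := by decide
    rcases Nat.even_or_odd m with ⟨j, hj⟩ | ⟨j, hj⟩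
    · have hC := Nred 32 7 (7 ^ 2) (7 ^ 1) (7 ^ 2) (7 ^ 0) (7 ^ 3) (7 ^ 2) m
        (Int.ModEq.refl _)
        (pow_reduce _ _ h4 (j + 1) 1 _ (by omega)) (pow_reduce _ _ h4 (j + 1) 2 _ (by omega))
        (pow_reduce _ _ h4 (2 * j + 2) 0 _ (by omega))
        (pow_reduce _ _ h4 j 3 _ (by omega)) (pow_reduce _ _ h4 j 2 _ (by omega))
      have h0 := Int.emod_eq_zero_of_dvd h32
      rw [Int.ModEq, h0] at hC
      norm_num at hC
    · have hC := Nred 32 7 (7 ^ 2) (7 ^ 3) (7 ^ 0) (7 ^ 0) (7 ^ 1) (7 ^ 0) m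
        (Int.ModEq.refl _)
        (pow_reduce _ _ h4 (j + 1) 3 _ (by omega)) (pow_reduce _ _ h4 (j + 2) 0 _ (by omega))
        (pow_reduce _ _ h4 (2 * j + 3) 0 _ (by omega))
        (pow_reduce _ _ h4 (j + 1) 1 _ (by omega)) (pow_reduce _ _ h4 (j + 1) 0 _ (by omega))
      have h0 := Int.emod_eq_zero_of_dvd h32
      rw [Int.ModEq, h0] at hC
      norm_num at hC
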